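/- For unit vectors u, v ∈ ℝⁿ, one has ‖u‖·‖v‖ − ⟨u,v⟩ = ½‖u − v‖²; consequently for a Lipschitz curve f with x,y ∈ ℝ/ℤ, w = x−y, the pointwise estimate d_f(x,y)² − ‖f(x)−f(y)‖² ≤ C ∫₀¹∫₀¹ (‖f'(x+σ₁w)‖‖f'(x+σ₂w)‖ − ⟨f'(x+σ₁w), f'(x+σ₂w)⟩) dσ₁ dσ₂ · |x−y|² holds with a constant depending only on the Lipschitz and bi-Lipschitz constants of f (for |x−y| ≤ 1/2). -/

import Mathlib

open RealInnerProductSpace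

open MeasureTheory in
lemma aux_intervalIntegrable {E : Type*} [NormedAddCommGroup E]
    (h : ℝ → E) (hm : AEStronglyMeasurable h volume) (M : ℝ)
    (hb : ∀ t, ‖h t‖ ≤ M) (a b : ℝ) : IntervalIntegrable h volume a b := by
  rw [intervalIntegrable_iff]
  refine Integrable.mono' (g := fun _ : ℝ => M) ?_ hm.restrict ?_
  · exact (integrableOn_const_iff).mpr (Or.inr measure_Ioc_lt_top)
  · exact Filter.Eventually.of_forall fun t => hb t

theorem intrinsic_extrinsic_estimate (n : ℕ)
    (f g : ℝ → EuclideanSpace ℝ (Fin n)) (L : NNReal) (c : ℝ) (hc : 0 < c)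
    (hf : LipschitzWith L f) (hper : Function.Periodic f 1)
    (hg : ∀ x : ℝ, HasDerivAt f (g x) x)
    (hbl : ∀ x y : ℝ, |x - y| ≤ 1 / 2 → c * |x - y| ≤ ‖f x - f y‖) :
    (∀ u v : EuclideanSpace ℝ (Fin n), ‖u‖ = 1 → ‖v‖ = 1 →
      ‖u‖ * ‖v‖ - ⟪u, v⟫ = ‖u - v‖ ^ 2 / 2) ∧
    ∃ C : ℝ, ∀ x y : ℝ, x ≠ y → |x - y| ≤ 1 / 2 →
      (min |∫ t in y..x, ‖g t‖| ((∫ t in (0 : ℝ)..1, ‖g t‖) - |∫ t in y..x, ‖g t‖|)) ^ 2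
          - ‖f x - f y‖ ^ 2 ≤
        C * (∫ σ₁ in (0 : ℝ)..1, ∫ σ₂ in (0 : ℝ)..1,
            (‖g (x + σ₁ * (y - x))‖ * ‖g (x + σ₂ * (y - x))‖ -
              ⟪g (x + σ₁ * (y - x)), g (x + σ₂ * (y - x))⟫)) * |x - y| ^ 2 := by
  constructor
  · intro u v hu hv
    have h := @norm_sub_sq_real (EuclideanSpace ℝ (Fin n)) _ _ u v
    rw [hu, hv] at h ⊢
    nlinarith [h]
  refine ⟨1, fun x y hxy hhalf => ?_⟩
  set w := y - x with hw
  have hw0 : w ≠ 0 := sub_ne_zero.mpr (Ne.symm hxy)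
  -- measurability and boundedness of g
  have hgsm : MeasureTheory.StronglyMeasurable g := by
    have h1 : g = deriv f := funext fun t => ((hg t).deriv).symm
    rw [h1]; exact stronglyMeasurable_deriv f
  have hgmeas : MeasureTheory.AEStronglyMeasurable g MeasureTheory.volume :=
    hgsm.aestronglyMeasurable
  have hgbd : ∀ t, ‖g t‖ ≤ (L : ℝ) := fun t => (hg t).le_of_lipschitz hf
  have hgint : ∀ a b : ℝ, IntervalIntegrable g MeasureTheory.volume a b :=
    aux_intervalIntegrable g hgmeas L hgbd
  -- φ
  set φ : ℝ → EuclideanSpace ℝ (Fin n) := fun σ => g (x + σ * w) with hφ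
  have hφmeas : MeasureTheory.AEStronglyMeasurable φ MeasureTheory.volume := by
    have hm : Measurable fun σ : ℝ => x + σ * w :=
      (measurable_id.mul_const w).const_add x
    exact (hgsm.comp_measurable hm).aestronglyMeasurable
  have hφbd : ∀ t, ‖φ t‖ ≤ (L : ℝ) := fun t => hgbd _
  have hφint : IntervalIntegrable φ MeasureTheory.volume 0 1 :=
    aux_intervalIntegrable φ hφmeas L hφbd 0 1
  have hφIoc : MeasureTheory.IntegrableOn φ (Set.Ioc (0:ℝ) 1) MeasureTheory.volume :=
    (intervalIntegrable_iff_integrableOn_Ioc_of_le zero_le_one).mp hφint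
  set S : ℝ := ∫ σ in (0:ℝ)..1, ‖φ σ‖ with hS
  set V : EuclideanSpace ℝ (Fin n) := ∫ σ in (0:ℝ)..1, φ σ with hV
  have hS0 : 0 ≤ S := intervalIntegral.integral_nonneg zero_le_one fun u _ => norm_nonneg _
  have h00 : x + w * 0 = x := by ring
  have h01 : x + w * 1 = y := by rw [hw]; ring
  -- substitution identities
  have hsubV : (∫ t in x..y, g t) = w • V := by
    have h1 : V = ∫ σ in (0:ℝ)..1, g (x + w * σ) := by
      rw [hV]; exact intervalIntegral.integral_congr fun σ _ => by rw [hφ, mul_comm]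
    have h2 := intervalIntegral.integral_comp_add_mul (a := (0:ℝ)) (b := 1) g hw0 x
    rw [h00, h01] at h2
    rw [h1, h2, smul_inv_smul₀ hw0]
  have hsubS : (∫ t in x..y, ‖g t‖) = w * S := by
    have h1 : S = ∫ σ in (0:ℝ)..1, ‖g (x + w * σ)‖ := by
      rw [hS]; exact intervalIntegral.integral_congr fun σ _ => by rw [hφ, mul_comm]
    have h2 := intervalIntegral.integral_comp_add_mul (a := (0:ℝ)) (b := 1)
      (fun t => ‖g t‖) hw0 x
    rw [h00, h01] at h2
    rw [h1, h2, smul_eq_mul, mul_inv_cancel_left₀ hw0]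
  -- FTC
  have hftc : f y - f x = ∫ t in x..y, g t :=
    (intervalIntegral.integral_eq_sub_of_hasDerivAt (fun t _ => hg t) (hgint x y)).symm
  have hnorm : ‖f x - f y‖ = |w| * ‖V‖ := by
    rw [← norm_neg, neg_sub, hftc, hsubV, norm_smul, Real.norm_eq_abs]
  -- arclength
  have harc : |∫ t in y..x, ‖g t‖| = |w| * S := by
    rw [intervalIntegral.integral_symm, hsubS, abs_neg, abs_mul, abs_of_nonneg hS0]
  have htot : 0 ≤ ∫ t in (0:ℝ)..1, ‖g t‖ :=
    intervalIntegral.integral_nonneg zero_le_one fun u _ => norm_nonneg _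
  -- min squared bound
  set m : ℝ := min |∫ t in y..x, ‖g t‖| ((∫ t in (0:ℝ)..1, ‖g t‖) - |∫ t in y..x, ‖g t‖|)
    with hmdef
  have hm2 : m ^ 2 ≤ (|w| * S) ^ 2 := by
    have h1 : m ≤ |w| * S := harc ▸ min_le_left _ _
    have h2 : -(|w| * S) ≤ m := by
      rw [hmdef, le_min_iff]
      constructor
      · rw [harc]; nlinarith [abs_nonneg w, mul_nonneg (abs_nonneg w) hS0]
      · rw [harc]; linarith
    exact sq_le_sq' h2 h1
  -- double integral computation
  have hinner : ∀ cvec : EuclideanSpace ℝ (Fin n),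
      (∫ σ in (0:ℝ)..1, ⟪cvec, φ σ⟫) = ⟪cvec, V⟫ := by
    intro cvec
    rw [hV, intervalIntegral.integral_of_le zero_le_one,
        intervalIntegral.integral_of_le zero_le_one]
    exact integral_inner hφIoc cvec
  have hinner_int : ∀ cvec : EuclideanSpace ℝ (Fin n),
      IntervalIntegrable (fun σ => ⟪cvec, φ σ⟫) MeasureTheory.volume 0 1 := by
    intro cvec
    refine aux_intervalIntegrable _ ?_ (‖cvec‖ * L) (fun t => ?_) 0 1
    · exact MeasureTheory.AEStronglyMeasurable.inner
        MeasureTheory.aestronglyMeasurable_const hφmeas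
    · rw [Real.norm_eq_abs]
      calc |⟪cvec, φ t⟫| ≤ ‖cvec‖ * ‖φ t‖ := abs_real_inner_le_norm _ _
        _ ≤ ‖cvec‖ * L := mul_le_mul_of_nonneg_left (hφbd t) (norm_nonneg _)
  have hnφ_int : IntervalIntegrable (fun σ => ‖φ σ‖) MeasureTheory.volume 0 1 :=
    hφint.norm
  have hinner_eval : ∀ σ₁ : ℝ,
      (∫ σ₂ in (0:ℝ)..1, (‖φ σ₁‖ * ‖φ σ₂‖ - ⟪φ σ₁, φ σ₂⟫)) = ‖φ σ₁‖ * S - ⟪φ σ₁, V⟫ := by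
    intro σ₁
    rw [intervalIntegral.integral_sub (hnφ_int.const_mul _) (hinner_int (φ σ₁)),
        intervalIntegral.integral_const_mul, hinner (φ σ₁)]
  have hdouble :
      (∫ σ₁ in (0:ℝ)..1, ∫ σ₂ in (0:ℝ)..1,
        (‖φ σ₁‖ * ‖φ σ₂‖ - ⟪φ σ₁, φ σ₂⟫)) = S * S - ‖V‖ ^ 2 := by
    have heq : (∫ σ₁ in (0:ℝ)..1, ∫ σ₂ in (0:ℝ)..1,
        (‖φ σ₁‖ * ‖φ σ₂‖ - ⟪φ σ₁, φ σ₂⟫))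
        = ∫ σ₁ in (0:ℝ)..1, (‖φ σ₁‖ * S - ⟪V, φ σ₁⟫) := by
      refine intervalIntegral.integral_congr fun σ₁ _ => ?_
      rw [hinner_eval σ₁, real_inner_comm]
    rw [heq, intervalIntegral.integral_sub (hnφ_int.mul_const _) (hinner_int V),
        intervalIntegral.integral_mul_const, hinner V, real_inner_self_eq_norm_sq]
  have hxyw : |x - y| = |w| := by rw [hw, abs_sub_comm]
  have hmain : (∫ σ₁ in (0:ℝ)..1, ∫ σ₂ in (0:ℝ)..1,
      (‖g (x + σ₁ * w)‖ * ‖g (x + σ₂ * w)‖ -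
        ⟪g (x + σ₁ * w), g (x + σ₂ * w)⟫)) = S * S - ‖V‖ ^ 2 := by
    rw [← hdouble]
  rw [hmain, hnorm, hxyw]
  nlinarith [hm2, sq_nonneg (|w|), sq_nonneg (|w| * ‖V‖)]
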